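/- Distortion coefficients of the LQ problem: assume the Kalman condition holds and that R₃(τ) is invertible for every τ ∈ (0,T]. For x ∈ ℝⁿ and τ ∈ [0,T] let Φ_{τ,x}(z) = R₃(τ)R₃(T)⁻¹ z + (R₄(τ) − R₃(τ)R₃(T)⁻¹R₄(T)) x be the map sending y to the τ-intermediate point of the unique optimal trajectory from x to y, and for a set F ⊂ ℝⁿ let Z_τ(x,F) = Φ_{τ,x}(F). Then for every x, y ∈ ℝⁿ, every r > 0 and every τ ∈ [0,T]: Leb(Z_τ(x,B_r(y))) = (det R₃(τ)/det R₃(T)) · Leb(B_r(y)); consequently the distortion coefficient β_τ(x,y) := limsup_{r→0⁺} Leb(Z_τ(x,B_r(y)))/Leb(B_r(y)) equals det R₃(τ)/det R₃(T), is independent of x and y, and is strictly positive for τ ∈ (0,T]. Moreover the backwards problem (with A replaced by −A) has the same distortion coefficients: det(−R₃(−τ))/det(−R₃(−T)) = det R₃(τ)/det R₃(T). -/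

import Mathlib

open Matrix MeasureTheory Filter Topology

noncomputable section

namespace LQ

variable {n m : ℕ}

def Om (n : ℕ) : Matrix (Fin n ⊕ Fin n) (Fin n ⊕ Fin n) ℝ :=
  Matrix.fromBlocks 0 1 (-1) 0

def Ham (A Q : Matrix (Fin n) (Fin n) ℝ) (B : Matrix (Fin n) (Fin m) ℝ) :
    Matrix (Fin n ⊕ Fin n) (Fin n ⊕ Fin n) ℝ :=
  Matrix.fromBlocks (B * Bᵀ) A Aᵀ Q

def flow (A Q : Matrix (Fin n) (Fin n) ℝ) (B : Matrix (Fin n) (Fin m) ℝ) (τ : ℝ) :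
    Matrix (Fin n ⊕ Fin n) (Fin n ⊕ Fin n) ℝ :=
  NormedSpace.exp ((-τ) • (Om n * Ham A Q B))

def R1 (A Q : Matrix (Fin n) (Fin n) ℝ) (B : Matrix (Fin n) (Fin m) ℝ) (τ : ℝ) :
    Matrix (Fin n) (Fin n) ℝ := (flow A Q B τ).toBlocks₁₁

def R2 (A Q : Matrix (Fin n) (Fin n) ℝ) (B : Matrix (Fin n) (Fin m) ℝ) (τ : ℝ) :
    Matrix (Fin n) (Fin n) ℝ := (flow A Q B τ).toBlocks₁₂

def R3 (A Q : Matrix (Fin n) (Fin n) ℝ) (B : Matrix (Fin n) (Fin m) ℝ) (τ : ℝ) :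
    Matrix (Fin n) (Fin n) ℝ := (flow A Q B τ).toBlocks₂₁

def R4 (A Q : Matrix (Fin n) (Fin n) ℝ) (B : Matrix (Fin n) (Fin m) ℝ) (τ : ℝ) :
    Matrix (Fin n) (Fin n) ℝ := (flow A Q B τ).toBlocks₂₂

def Kalman (A : Matrix (Fin n) (Fin n) ℝ) (B : Matrix (Fin n) (Fin m) ℝ) : Prop :=
  Submodule.span ℝ
    {v : Fin n → ℝ | ∃ j : Fin n, ∃ i : Fin m, v = (A ^ (j : ℕ)).mulVec (Bᵀ i)} = ⊤

/-- The Euclidean ball in `Fin n → ℝ`. -/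
def Eball (y : Fin n → ℝ) (r : ℝ) : Set (Fin n → ℝ) :=
  {z | ∑ i, (z i - y i)^2 < r^2}

/-! ### Auxiliary lemmas -/

lemma neg_om (n : ℕ) : -(Om n) = Matrix.fromBlocks 0 (-1) 1 0 := by
  rw [Om, Matrix.fromBlocks_neg, neg_zero, neg_neg]

lemma om_mul_neg_om (n : ℕ) : Om n * -(Om n) = 1 := by
  rw [neg_om]
  simp [Om, Matrix.fromBlocks_multiply, ← Matrix.fromBlocks_one]

lemma neg_om_mul_om (n : ℕ) : -(Om n) * Om n = 1 := by
  rw [neg_om]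
  simp [Om, Matrix.fromBlocks_multiply, ← Matrix.fromBlocks_one]

lemma isUnit_om (n : ℕ) : IsUnit (Om n) :=
  ⟨⟨Om n, -(Om n), om_mul_neg_om n, neg_om_mul_om n⟩, rfl⟩

lemma om_inv (n : ℕ) : (Om n)⁻¹ = -(Om n) :=
  Matrix.inv_eq_right_inv (om_mul_neg_om n)

lemma om_transpose (n : ℕ) : (Om n)ᵀ = -(Om n) := by
  rw [neg_om, Om, Matrix.fromBlocks_transpose]
  simp

lemma ham_transpose (A Q : Matrix (Fin n) (Fin n) ℝ) (B : Matrix (Fin n) (Fin m) ℝ)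
    (hQ : Q.IsSymm) : (Ham A Q B)ᵀ = Ham A Q B := by
  rw [Ham, Matrix.fromBlocks_transpose, Matrix.transpose_mul, Matrix.transpose_transpose, hQ.eq]
  rfl

lemma conj_key (A Q : Matrix (Fin n) (Fin n) ℝ) (B : Matrix (Fin n) (Fin m) ℝ)
    (hQ : Q.IsSymm) (t : ℝ) :
    Om n * ((-t) • (Om n * Ham A Q B))ᵀ * (Om n)⁻¹ = t • (Om n * Ham A Q B) := by
  rw [om_inv, Matrix.transpose_smul, Matrix.transpose_mul, ham_transpose A Q B hQ,
    om_transpose]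
  have om2 : Om n * Om n = -1 := by
    have h := om_mul_neg_om n
    rw [mul_neg, neg_eq_iff_eq_neg] at h
    rw [h]
  rw [Matrix.mul_smul, Matrix.smul_mul]
  have key : Om n * (Ham A Q B * -Om n) * -Om n = -(Om n * Ham A Q B) := by
    rw [mul_assoc (Om n), mul_assoc (Ham A Q B), neg_mul_neg, om2, mul_neg_one, mul_neg]
  rw [key, neg_smul_neg]

lemma flow_neg (A Q : Matrix (Fin n) (Fin n) ℝ) (B : Matrix (Fin n) (Fin m) ℝ)
    (hQ : Q.IsSymm) (t : ℝ) :
    flow A Q B (-t) = Om n * (flow A Q B t)ᵀ * (Om n)⁻¹ := by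
  rw [flow, flow, ← Matrix.exp_transpose, ← Matrix.exp_conj (Om n) _ (isUnit_om n),
    conj_key A Q B hQ, neg_neg]

lemma R3_neg (A Q : Matrix (Fin n) (Fin n) ℝ) (B : Matrix (Fin n) (Fin m) ℝ)
    (hQ : Q.IsSymm) (t : ℝ) :
    R3 A Q B (-t) = -(R3 A Q B t)ᵀ := by
  have h : flow A Q B (-t) =
      Matrix.fromBlocks (R4 A Q B t)ᵀ (-(R2 A Q B t)ᵀ) (-(R3 A Q B t)ᵀ) (R1 A Q B t)ᵀ := by
    rw [flow_neg A Q B hQ t, om_inv, ← Matrix.fromBlocks_toBlocks (flow A Q B t),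
      Matrix.fromBlocks_transpose, neg_om, Om, Matrix.fromBlocks_multiply,
      Matrix.fromBlocks_multiply]
    simp [R1, R2, R3, R4]
  rw [R3, h, Matrix.toBlocks_fromBlocks₂₁]

lemma continuous_detR3 (A Q : Matrix (Fin n) (Fin n) ℝ) (B : Matrix (Fin n) (Fin m) ℝ) :
    Continuous (fun t : ℝ => (R3 A Q B t).det) := by
  have h1 : Continuous (fun t : ℝ => flow A Q B t) := by
    letI : SeminormedRing (Matrix (Fin n ⊕ Fin n) (Fin n ⊕ Fin n) ℝ) :=
      Matrix.linftyOpSemiNormedRing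
    letI : NormedRing (Matrix (Fin n ⊕ Fin n) (Fin n ⊕ Fin n) ℝ) := Matrix.linftyOpNormedRing
    letI : NormedAlgebra ℝ (Matrix (Fin n ⊕ Fin n) (Fin n ⊕ Fin n) ℝ) :=
      Matrix.linftyOpNormedAlgebra
    letI : NormedAlgebra ℚ (Matrix (Fin n ⊕ Fin n) (Fin n ⊕ Fin n) ℝ) :=
      NormedAlgebra.restrictScalars ℚ ℝ _
    unfold flow
    exact NormedSpace.exp_continuous.comp (continuous_neg.smul continuous_const)
  have h2 : Continuous (fun t : ℝ => R3 A Q B t) := by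
    refine continuous_matrix fun i j => ?_
    show Continuous fun t : ℝ => flow A Q B t (Sum.inr i) (Sum.inl j)
    exact (continuous_apply_apply _ _).comp h1
  exact h2.matrix_det

lemma R3_zero (A Q : Matrix (Fin n) (Fin n) ℝ) (B : Matrix (Fin n) (Fin m) ℝ) :
    R3 A Q B 0 = 0 := by
  rw [R3, flow, neg_zero, zero_smul, NormedSpace.exp_zero, ← Matrix.fromBlocks_one,
    Matrix.toBlocks_fromBlocks₂₁]

lemma Eball_isOpen (y : Fin n → ℝ) (r : ℝ) : IsOpen (Eball y r) := by
  have : Continuous fun z : Fin n → ℝ => ∑ i, (z i - y i)^2 := by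
    apply continuous_finset_sum
    intro i _
    exact ((continuous_apply i).sub continuous_const).pow 2
  exact isOpen_lt this continuous_const

lemma Eball_volume_pos (hn : 0 < n) (y : Fin n → ℝ) {r : ℝ} (hr : 0 < r) :
    0 < volume (Eball y r) := by
  refine (Eball_isOpen y r).measure_pos volume ⟨y, ?_⟩
  simp only [Eball, Set.mem_setOf_eq, sub_self]
  simpa using pow_pos hr 2

lemma Eball_volume_lt_top (y : Fin n → ℝ) {r : ℝ} (hr : 0 < r) :
    volume (Eball y r) < ⊤ := by
  refine lt_of_le_of_lt (measure_mono ?_) (measure_ball_lt_top (x := y) (r := r))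
  intro z hz
  rw [Metric.mem_ball, dist_pi_lt_iff hr]
  intro i
  have h1 : (z i - y i)^2 ≤ ∑ j, (z j - y j)^2 :=
    Finset.single_le_sum (f := fun j => (z j - y j)^2) (fun j _ => sq_nonneg _)
      (Finset.mem_univ i)
  have h2 : (z i - y i)^2 < r^2 := lt_of_le_of_lt h1 hz
  have : |z i - y i| < r := by nlinarith [abs_nonneg (z i - y i), sq_abs (z i - y i)]
  simpa [Real.dist_eq] using this

/-- Distortion coefficients of the LQ problem: the Lebesgue measure of the set of
`τ`-intermediate points `Z_τ(x, B_r(y))` equals `(det R₃(τ)/det R₃(T))·Leb(B_r(y))`;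
hence `β_τ(x,y) = det R₃(τ)/det R₃(T)` is independent of `x, y` and positive for
`τ ∈ (0,T]`, and the backwards problem has the same distortion coefficients. -/
theorem distortion_coefficients
    {n m : ℕ} (hm : 1 ≤ m) (hmn : m ≤ n)
    (A Q : Matrix (Fin n) (Fin n) ℝ) (B : Matrix (Fin n) (Fin m) ℝ)
    (hQ : Q.IsSymm) (hB : B.rank = m)
    (T : ℝ) (hT : 0 < T) (hKal : Kalman A B)
    (hR3 : ∀ τ ∈ Set.Ioc 0 T, IsUnit (R3 A Q B τ))
    (x y : Fin n → ℝ) (τ : ℝ) (hτ : τ ∈ Set.Icc 0 T) :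
    letI Φ : (Fin n → ℝ) → Fin n → ℝ := fun z =>
      (R3 A Q B τ * (R3 A Q B T)⁻¹).mulVec z +
        (R4 A Q B τ - R3 A Q B τ * (R3 A Q B T)⁻¹ * R4 A Q B T).mulVec x
    (∀ r : ℝ, 0 < r →
      volume (Φ '' Eball y r) =
        ENNReal.ofReal ((R3 A Q B τ).det / (R3 A Q B T).det) * volume (Eball y r)) ∧
    (Filter.limsup (fun r : ℝ => volume (Φ '' Eball y r) / volume (Eball y r))
        (𝓝[>] (0:ℝ)) =
      ENNReal.ofReal ((R3 A Q B τ).det / (R3 A Q B T).det)) ∧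
    (0 < τ → 0 < (R3 A Q B τ).det / (R3 A Q B T).det) ∧
    ((-(R3 A Q B (-τ))).det / (-(R3 A Q B (-T))).det
      = (R3 A Q B τ).det / (R3 A Q B T).det) := by
  have hnpos : 0 < n := hm.trans hmn
  haveI : Nonempty (Fin n) := ⟨⟨0, hnpos⟩⟩
  set f : ℝ → ℝ := fun t => (R3 A Q B t).det with hf
  have hcont : Continuous f := continuous_detR3 A Q B
  have hne : ∀ t ∈ Set.Ioc (0:ℝ) T, f t ≠ 0 := by
    intro t ht
    have := (Matrix.isUnit_iff_isUnit_det _).mp (hR3 t ht)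
    exact this.ne_zero
  have hTne : f T ≠ 0 := hne T ⟨hT, le_refl T⟩
  -- same sign of the determinant on (0, T]
  have hsign : ∀ t ∈ Set.Ioc (0:ℝ) T, 0 < f t / f T := by
    intro t ht
    have htne : f t ≠ 0 := hne t ht
    by_contra hcon
    push_neg at hcon
    have hlt : f t / f T < 0 :=
      lt_of_le_of_ne hcon (div_ne_zero htne hTne)
    have hsub : Set.uIcc t T ⊆ Set.Ioc (0:ℝ) T := by
      rw [Set.uIcc_eq_union]
      rintro s (hs | hs)
      · exact ⟨lt_of_lt_of_le ht.1 hs.1, hs.2⟩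
      · exact ⟨lt_of_lt_of_le hT hs.1, le_trans hs.2 ht.2⟩
    have h0 : (0:ℝ) ∈ Set.uIcc (f t) (f T) := by
      rcases div_neg_iff.mp hlt with ⟨h1, h2⟩ | ⟨h1, h2⟩
      · exact Set.mem_uIcc.mpr (Or.inr ⟨le_of_lt h2, le_of_lt h1⟩)
      · exact Set.mem_uIcc.mpr (Or.inl ⟨le_of_lt h1, le_of_lt h2⟩)
    obtain ⟨s, hs, hfs⟩ := intermediate_value_uIcc (hcont.continuousOn) h0
    exact hne s (hsub hs) hfs
  -- the determinant of the matrix of Φ's linear part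
  set c : ℝ := (R3 A Q B τ).det / (R3 A Q B T).det with hc
  set M : Matrix (Fin n) (Fin n) ℝ := R3 A Q B τ * (R3 A Q B T)⁻¹ with hM
  have hdetM : M.det = c := by
    rw [hM, hc, Matrix.det_mul, Matrix.det_nonsing_inv, Ring.inverse_eq_inv', div_eq_mul_inv]
  have hcnonneg : 0 ≤ c := by
    rcases eq_or_lt_of_le hτ.1 with h0 | hpos
    · have : f τ = 0 := by rw [← h0, hf]; simp [R3_zero]
      rw [hc]
      show 0 ≤ f τ / f T
      rw [this, zero_div]
    · exact le_of_lt (hsign τ ⟨hpos, hτ.2⟩)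
  have habs : |M.det| = c := by rw [hdetM, abs_of_nonneg hcnonneg]
  -- first claim
  have claim1 : ∀ r : ℝ, 0 < r →
      volume ((fun z => (R3 A Q B τ * (R3 A Q B T)⁻¹).mulVec z +
          (R4 A Q B τ - R3 A Q B τ * (R3 A Q B T)⁻¹ * R4 A Q B T).mulVec x) '' Eball y r) =
        ENNReal.ofReal c * volume (Eball y r) := by
    intro r hr
    have himg : (fun z => (R3 A Q B τ * (R3 A Q B T)⁻¹).mulVec z +
          (R4 A Q B τ - R3 A Q B τ * (R3 A Q B T)⁻¹ * R4 A Q B T).mulVec x) '' Eball y r =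
        (fun v => v + (R4 A Q B τ - R3 A Q B τ * (R3 A Q B T)⁻¹ * R4 A Q B T).mulVec x) ''
          ((M.mulVecLin) '' Eball y r) := by
      rw [Set.image_image]
      rfl
    rw [himg, Set.image_add_right, measure_preimage_add_right,
      MeasureTheory.Measure.addHaar_image_linearMap, ← Matrix.toLin'_apply',
      LinearMap.det_toLin', habs]
  refine ⟨claim1, ?_, ?_, ?_⟩
  · -- limsup claim
    have heq : (fun r : ℝ => volume ((fun z => (R3 A Q B τ * (R3 A Q B T)⁻¹).mulVec z +
          (R4 A Q B τ - R3 A Q B τ * (R3 A Q B T)⁻¹ * R4 A Q B T).mulVec x) '' Eball y r) /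
          volume (Eball y r))
        =ᶠ[𝓝[>] (0:ℝ)] fun _ => ENNReal.ofReal c := by
      filter_upwards [self_mem_nhdsWithin] with r hr
      have hr' : 0 < r := hr
      rw [claim1 r hr', mul_div_assoc,
        ENNReal.div_self (Eball_volume_pos hnpos y hr').ne' (Eball_volume_lt_top y hr').ne,
        mul_one]
    rw [limsup_congr heq, limsup_const]
  · intro hpos
    exact hsign τ ⟨hpos, hτ.2⟩
  · rw [R3_neg A Q B hQ τ, R3_neg A Q B hQ T, neg_neg, neg_neg,
      Matrix.det_transpose, Matrix.det_transpose]

end LQ
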